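/- With E(N, a₁, a₂) as the twist-untwist empirical error formula, if a_j = c_j/√N with c₂ ≠ −c₁ (both nonzero, c₁ < 0), then N²·E(N, c₁/√N, c₂/√N) → ∞ as N → ∞. -/

import Mathlib

open Real Filter

/-- Empirical (method-of-moments) error at φ = 0 of the generalized protocol. -/
noncomputable def E (N : ℕ) (a₁ a₂ : ℝ) : ℝ :=
  (2 * ((N : ℝ) + 1) - 2 * ((N : ℝ) - 1) * Real.cos (2 * (a₁ + a₂)) ^ (N - 2)) /
    ((N : ℝ) * ((N : ℝ) - 1) ^ 2 * Real.sin a₂ ^ 2 *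
      (Real.cos a₂ ^ (N - 2) + Real.cos (2 * a₁ + a₂) ^ (N - 2)) ^ 2)

open Topology

lemma sinc_tendsto : Tendsto (fun x : ℝ => Real.sin x / x) (𝓝[≠] 0) (𝓝 1) := by
  have h := Real.hasDerivAt_sin 0
  rw [Real.cos_zero] at h
  have h2 := hasDerivAt_iff_tendsto_slope.mp h
  refine h2.congr fun x => ?_
  simp [slope_def_field]

lemma log1p_tendsto : Tendsto (fun x : ℝ => Real.log (1 + x) / x) (𝓝[≠] 0) (𝓝 1) := by
  have h := Real.hasDerivAt_log one_ne_zero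
  rw [inv_one] at h
  have h2 := hasDerivAt_iff_tendsto_slope.mp h
  have hmap : Tendsto (fun x : ℝ => 1 + x) (𝓝[≠] (0:ℝ)) (𝓝[≠] (1:ℝ)) := by
    rw [tendsto_nhdsWithin_iff]
    constructor
    · have : Tendsto (fun x : ℝ => 1 + x) (𝓝 (0:ℝ)) (𝓝 (1:ℝ)) := by
        have h0 := (continuous_const.add continuous_id : Continuous fun x : ℝ => 1 + x).tendsto 0
        simpa [Pi.add_def] using h0
      exact this.mono_left nhdsWithin_le_nhds
    · filter_upwards [self_mem_nhdsWithin] with x hx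
      simp only [Set.mem_compl_iff, Set.mem_singleton_iff] at hx ⊢
      intro h'; exact hx (by linarith)
  have h3 := h2.comp hmap
  refine h3.congr fun x => ?_
  simp [slope_def_field, Real.log_one]

lemma cos_sub_one_key (x : ℝ) : Real.cos x - 1 = -2 * Real.sin (x/2) ^ 2 := by
  have h1 := Real.sin_sq_add_cos_sq (x/2)
  have h2 := Real.cos_two_mul' (x/2)
  have : Real.cos x = Real.cos (2 * (x/2)) := by ring_nf
  rw [this, h2]; nlinarith

lemma cos_sub_one_tendsto :
    Tendsto (fun x : ℝ => (Real.cos x - 1) / x ^ 2) (𝓝[≠] 0) (𝓝 (-(1/2))) := by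
  have hhalf : Tendsto (fun x : ℝ => x / 2) (𝓝[≠] (0:ℝ)) (𝓝[≠] (0:ℝ)) := by
    rw [tendsto_nhdsWithin_iff]
    constructor
    · have : Tendsto (fun x : ℝ => x / 2) (𝓝 (0:ℝ)) (𝓝 (0:ℝ)) := by
        have h0 := (continuous_id.div_const 2 : Continuous fun x : ℝ => x / 2).tendsto 0
        simpa using h0
      exact this.mono_left nhdsWithin_le_nhds
    · filter_upwards [self_mem_nhdsWithin] with x hx
      simp only [Set.mem_compl_iff, Set.mem_singleton_iff] at hx ⊢
      exact fun h' => hx (by linarith)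
  have h1 : Tendsto (fun x : ℝ => -(1/2) * (Real.sin (x/2) / (x/2)) ^ 2) (𝓝[≠] (0:ℝ))
      (𝓝 (-(1/2) * 1 ^ 2)) :=
    tendsto_const_nhds.mul ((sinc_tendsto.comp hhalf).pow 2)
  rw [show (-(1/2) * (1:ℝ) ^ 2) = -(1/2) by norm_num] at h1
  refine h1.congr' ?_
  filter_upwards [self_mem_nhdsWithin] with x hx
  simp only [Set.mem_compl_iff, Set.mem_singleton_iff] at hx
  rw [cos_sub_one_key x]
  field_simp

lemma log_cos_tendsto :
    Tendsto (fun x : ℝ => Real.log (Real.cos x) / x ^ 2) (𝓝[≠] 0) (𝓝 (-(1/2))) := by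
  have hcosne : ∀ᶠ x in 𝓝[≠] (0:ℝ), Real.cos x - 1 ≠ 0 := by
    have hball : ∀ᶠ x in 𝓝[≠] (0:ℝ), |x| < 1 := by
      apply eventually_nhdsWithin_of_eventually_nhds
      have := Metric.ball_mem_nhds (0:ℝ) one_pos
      filter_upwards [this] with x hx
      simpa [Real.dist_eq] using hx
    filter_upwards [hball, self_mem_nhdsWithin] with x hx hx0
    simp only [Set.mem_compl_iff, Set.mem_singleton_iff] at hx0
    rw [cos_sub_one_key x]
    have : Real.sin (x/2) ≠ 0 := by
      intro h
      rcases Real.sin_eq_zero_iff.mp h with ⟨n, hn⟩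
      have hpi := Real.pi_gt_three
      rcases lt_trichotomy n 0 with h1 | h1 | h1
      · have hn1 : n ≤ -1 := by omega
        have : (n:ℝ) ≤ -1 := by exact_mod_cast hn1
        nlinarith [abs_lt.mp hx]
      · simp [h1] at hn; exact hx0 (by linarith)
      · have : (1:ℝ) ≤ (n:ℝ) := by exact_mod_cast h1
        nlinarith [abs_lt.mp hx]
    intro hc
    have hsq : Real.sin (x/2) ^ 2 = 0 := by linarith
    exact this (pow_eq_zero_iff (n := 2) (by norm_num) |>.mp hsq)
  have hv : Tendsto (fun x : ℝ => Real.cos x - 1) (𝓝[≠] (0:ℝ)) (𝓝[≠] (0:ℝ)) := by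
    rw [tendsto_nhdsWithin_iff]
    constructor
    · have : Tendsto (fun x : ℝ => Real.cos x - 1) (𝓝 (0:ℝ)) (𝓝 (0:ℝ)) := by
        have h0 := (Real.continuous_cos.sub continuous_const : Continuous fun x : ℝ => Real.cos x - 1).tendsto 0
        simpa [Pi.sub_def] using h0
      exact this.mono_left nhdsWithin_le_nhds
    · filter_upwards [hcosne] with x hx
      simpa using hx
  have h1 : Tendsto (fun x : ℝ =>
      (Real.log (1 + (Real.cos x - 1)) / (Real.cos x - 1)) * ((Real.cos x - 1) / x ^ 2))
      (𝓝[≠] (0:ℝ)) (𝓝 (1 * -(1/2))) :=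
    (log1p_tendsto.comp hv).mul cos_sub_one_tendsto
  rw [one_mul] at h1
  refine h1.congr' ?_
  filter_upwards [hcosne] with x hx
  rw [show (1 + (Real.cos x - 1)) = Real.cos x by ring]
  field_simp

lemma sqrt_nat_atTop : Tendsto (fun N : ℕ => Real.sqrt N) atTop atTop := by
  rw [tendsto_atTop_atTop]
  intro b
  refine ⟨⌈b ^ 2⌉₊, fun N hN => ?_⟩
  have h1 : b ≤ Real.sqrt (b ^ 2) := by
    rw [Real.sqrt_sq_eq_abs]; exact le_abs_self b
  refine h1.trans (Real.sqrt_le_sqrt ?_)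
  calc b ^ 2 ≤ (⌈b ^ 2⌉₊ : ℝ) := Nat.le_ceil _
    _ ≤ (N : ℝ) := by exact_mod_cast hN

lemma u_tendsto (t : ℝ) : Tendsto (fun N : ℕ => t / Real.sqrt N) atTop (𝓝 0) :=
  tendsto_const_nhds.div_atTop sqrt_nat_atTop

lemma u_tendsto_ne (t : ℝ) (ht : t ≠ 0) :
    Tendsto (fun N : ℕ => t / Real.sqrt N) atTop (𝓝[≠] 0) := by
  rw [tendsto_nhdsWithin_iff]
  refine ⟨u_tendsto t, ?_⟩
  filter_upwards [eventually_ge_atTop 1] with N hN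
  have hs : 0 < Real.sqrt N := Real.sqrt_pos.mpr (by exact_mod_cast hN)
  simp only [Set.mem_compl_iff, Set.mem_singleton_iff]
  exact div_ne_zero ht hs.ne'

lemma pow_cos_tendsto (t : ℝ) :
    Tendsto (fun N : ℕ => Real.cos (t / Real.sqrt N) ^ (N - 2)) atTop
      (𝓝 (Real.exp (-(t ^ 2) / 2))) := by
  rcases eq_or_ne t 0 with rfl | ht
  · simp only [zero_div, Real.cos_zero, one_pow]
    norm_num
  -- t ≠ 0
  have hcosne := (log_cos_tendsto).comp (u_tendsto_ne t ht)
  have hfrac : Tendsto (fun N : ℕ => ((N : ℝ) - 2) / N) atTop (𝓝 1) := by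
    have h1 : Tendsto (fun N : ℕ => 1 - 2 / (N : ℝ)) atTop (𝓝 (1 - 0)) :=
      tendsto_const_nhds.sub (tendsto_const_nhds.div_atTop tendsto_natCast_atTop_atTop)
    rw [sub_zero] at h1
    refine h1.congr' ?_
    filter_upwards [eventually_ge_atTop 1] with N hN
    have : (N : ℝ) ≠ 0 := by positivity
    field_simp
  have hkey : Tendsto (fun N : ℕ => ((N : ℝ) - 2) / N * t ^ 2 *
      (Real.log (Real.cos (t / Real.sqrt N)) / (t / Real.sqrt N) ^ 2)) atTop
      (𝓝 (1 * t ^ 2 * -(1/2))) :=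
    (hfrac.mul tendsto_const_nhds).mul hcosne
  have hexp := (Real.continuous_exp.tendsto _).comp hkey
  have hlim : Real.exp (1 * t ^ 2 * -(1/2)) = Real.exp (-(t ^ 2) / 2) := by ring_nf
  rw [hlim] at hexp
  refine hexp.congr' ?_
  have hcos_pos : ∀ᶠ N : ℕ in atTop, 0 < Real.cos (t / Real.sqrt N) := by
    have := (Real.continuous_cos.tendsto 0).comp (u_tendsto t)
    rw [Real.cos_zero] at this
    exact this.eventually (eventually_gt_nhds (by norm_num : (0:ℝ) < 1))
  filter_upwards [eventually_ge_atTop 2, hcos_pos] with N hN2 hcos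
  have hN0 : (N : ℝ) ≠ 0 := by positivity
  have hs : 0 < Real.sqrt N := Real.sqrt_pos.mpr (by positivity)
  have hu0 : t / Real.sqrt N ≠ 0 := div_ne_zero ht hs.ne'
  have hu2 : (t / Real.sqrt N) ^ 2 = t ^ 2 / N := by
    rw [div_pow, Real.sq_sqrt (by positivity : (0:ℝ) ≤ N)]
  have hcast : ((N - 2 : ℕ) : ℝ) = (N : ℝ) - 2 := by
    rw [Nat.cast_sub hN2]; norm_num
  have heq : ((N : ℝ) - 2) / N * t ^ 2 *
      (Real.log (Real.cos (t / Real.sqrt N)) / (t / Real.sqrt N) ^ 2) =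
      ((N - 2 : ℕ) : ℝ) * Real.log (Real.cos (t / Real.sqrt N)) := by
    rw [hcast, hu2]
    have ht2 : t ^ 2 ≠ 0 := pow_ne_zero 2 ht
    field_simp
  simp only [Function.comp_apply]
  rw [heq, Real.exp_nat_mul, Real.exp_log hcos]

lemma frac_tendsto (a : ℝ) : Tendsto (fun N : ℕ => ((N : ℝ) + a) / N) atTop (𝓝 1) := by
  have h1 : Tendsto (fun N : ℕ => 1 + a / (N : ℝ)) atTop (𝓝 (1 + 0)) :=
    tendsto_const_nhds.add (tendsto_const_nhds.div_atTop tendsto_natCast_atTop_atTop)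
  rw [add_zero] at h1
  refine h1.congr' ?_
  filter_upwards [eventually_ge_atTop 1] with N hN
  have : (N : ℝ) ≠ 0 := by positivity
  field_simp

/-- If a_j = c_j/√N with c₁ < 0, c₂ ≠ 0 and c₂ ≠ −c₁, then N²·E(N, a₁, a₂) → ∞. -/
theorem stmt_9 (c₁ c₂ : ℝ) (hc₁ : c₁ < 0) (hc₂ : c₂ ≠ 0) (hne : c₂ ≠ -c₁) :
    Tendsto (fun N : ℕ =>
        (N : ℝ) ^ 2 * E N (c₁ / Real.sqrt (N : ℝ)) (c₂ / Real.sqrt (N : ℝ)))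
      atTop atTop := by
  have hsum_ne : c₁ + c₂ ≠ 0 := fun h => hne (by linarith)
  set LX := Real.exp (-(2 * (c₁ + c₂)) ^ 2 / 2) with hLXdef
  set LY := Real.exp (-c₂ ^ 2 / 2) with hLYdef
  set LZ := Real.exp (-(2 * c₁ + c₂) ^ 2 / 2) with hLZdef
  have hX := pow_cos_tendsto (2 * (c₁ + c₂))
  have hY := pow_cos_tendsto c₂
  have hZ := pow_cos_tendsto (2 * c₁ + c₂)
  have hYZ : Tendsto (fun N : ℕ => Real.cos (c₂ / Real.sqrt N) ^ (N - 2) +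
      Real.cos ((2 * c₁ + c₂) / Real.sqrt N) ^ (N - 2)) atTop (𝓝 (LY + LZ)) := hY.add hZ
  -- N * sin²(c₂/√N) → c₂²
  have hS : Tendsto (fun N : ℕ => (N : ℝ) * Real.sin (c₂ / Real.sqrt N) ^ 2) atTop
      (𝓝 (c₂ ^ 2)) := by
    have h1 : Tendsto (fun N : ℕ =>
        c₂ ^ 2 * (Real.sin (c₂ / Real.sqrt N) / (c₂ / Real.sqrt N)) ^ 2) atTop
        (𝓝 (c₂ ^ 2 * 1 ^ 2)) :=
      tendsto_const_nhds.mul ((sinc_tendsto.comp (u_tendsto_ne c₂ hc₂)).pow 2)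
    rw [show c₂ ^ 2 * (1:ℝ) ^ 2 = c₂ ^ 2 by ring] at h1
    refine h1.congr' ?_
    filter_upwards [eventually_ge_atTop 1] with N hN
    have hN0 : (0:ℝ) < N := by exact_mod_cast hN
    have hs : 0 < Real.sqrt N := Real.sqrt_pos.mpr hN0
    have hu2 : (c₂ / Real.sqrt N) ^ 2 = c₂ ^ 2 / N := by
      rw [div_pow, Real.sq_sqrt hN0.le]
    rw [div_pow, hu2]
    field_simp
  -- numerator/N
  have hnum : Tendsto (fun N : ℕ =>
      (2 * ((N : ℝ) + 1) - 2 * ((N : ℝ) - 1) *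
        Real.cos ((2 * (c₁ + c₂)) / Real.sqrt N) ^ (N - 2)) / N) atTop
      (𝓝 (2 - 2 * LX)) := by
    have h1 : Tendsto (fun N : ℕ =>
        2 * (((N : ℝ) + 1) / N) - 2 * (((N : ℝ) + (-1)) / N) *
          Real.cos ((2 * (c₁ + c₂)) / Real.sqrt N) ^ (N - 2)) atTop
        (𝓝 (2 * 1 - 2 * 1 * LX)) :=
      (tendsto_const_nhds.mul (frac_tendsto 1)).sub
        ((tendsto_const_nhds.mul (frac_tendsto (-1))).mul hX)
    rw [show (2 * (1:ℝ) - 2 * 1 * LX) = 2 - 2 * LX by ring] at h1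
    refine h1.congr' ?_
    filter_upwards [eventually_ge_atTop 1] with N hN
    have hN0 : (N : ℝ) ≠ 0 := by positivity
    rw [sub_div]
    ring
  -- denominator/N²
  have hden : Tendsto (fun N : ℕ =>
      (((N : ℝ) + (-1)) / N) ^ 2 * ((N : ℝ) * Real.sin (c₂ / Real.sqrt N) ^ 2) *
        (Real.cos (c₂ / Real.sqrt N) ^ (N - 2) +
          Real.cos ((2 * c₁ + c₂) / Real.sqrt N) ^ (N - 2)) ^ 2) atTop
      (𝓝 (1 ^ 2 * c₂ ^ 2 * (LY + LZ) ^ 2)) :=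
    (((frac_tendsto (-1)).pow 2).mul hS).mul (hYZ.pow 2)
  have hKpos : 0 < LY + LZ := by positivity
  have hDpos : 0 < (1:ℝ) ^ 2 * c₂ ^ 2 * (LY + LZ) ^ 2 := by positivity
  have hLX1 : LX < 1 := by
    rw [hLXdef, Real.exp_lt_one_iff]
    have : (0:ℝ) < (2 * (c₁ + c₂)) ^ 2 := by positivity
    linarith
  have hPpos : 0 < 2 - 2 * LX := by linarith
  have hratio := hnum.div hden hDpos.ne'
  -- N * E → positive limit
  have hNE : Tendsto (fun N : ℕ =>
      (N : ℝ) * E N (c₁ / Real.sqrt N) (c₂ / Real.sqrt N)) atTop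
      (𝓝 ((2 - 2 * LX) / (1 ^ 2 * c₂ ^ 2 * (LY + LZ) ^ 2))) := by
    refine hratio.congr' ?_
    have hsin_ne : ∀ᶠ N : ℕ in atTop, Real.sin (c₂ / Real.sqrt N) ≠ 0 := by
      have := hS.eventually (eventually_gt_nhds (by positivity : (0:ℝ) < c₂ ^ 2))
      filter_upwards [this] with N h1
      intro h0
      rw [h0] at h1
      simp at h1
    have hYZpos : ∀ᶠ N : ℕ in atTop,
        0 < Real.cos (c₂ / Real.sqrt N) ^ (N - 2) +
          Real.cos ((2 * c₁ + c₂) / Real.sqrt N) ^ (N - 2) :=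
      hYZ.eventually (eventually_gt_nhds hKpos)
    filter_upwards [eventually_ge_atTop 2, hsin_ne, hYZpos] with N hN2 hsin hyz
    have hN0 : (0:ℝ) < N := by exact_mod_cast (by omega : 1 ≤ N)
    have hN1 : (N : ℝ) - 1 ≠ 0 := by
      have : (2:ℝ) ≤ N := by exact_mod_cast hN2
      linarith
    have harg1 : 2 * (c₁ / Real.sqrt N + c₂ / Real.sqrt N) = (2 * (c₁ + c₂)) / Real.sqrt N := by
      ring
    have harg2 : 2 * (c₁ / Real.sqrt N) + c₂ / Real.sqrt N = (2 * c₁ + c₂) / Real.sqrt N := by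
      ring
    simp only [E, harg1, harg2, Pi.div_apply]
    set S := Real.sin (c₂ / Real.sqrt N) with hSdef
    set A := Real.cos (c₂ / Real.sqrt N) ^ (N - 2) with hAdef
    set B := Real.cos ((2 * c₁ + c₂) / Real.sqrt N) ^ (N - 2) with hBdef
    set X := Real.cos (2 * (c₁ + c₂) / Real.sqrt N) ^ (N - 2) with hXdef
    have hAB : A + B ≠ 0 := ne_of_gt hyz
    have hN0' : (N : ℝ) ≠ 0 := hN0.ne'
    have hN1' : (N : ℝ) + (-1) ≠ 0 := by rw [← sub_eq_add_neg]; exact hN1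
    set n := 2 * ((N : ℝ) + 1) - 2 * ((N : ℝ) - 1) * X with hndef
    have hinner : (((N : ℝ) + (-1)) / N) ^ 2 * ((N : ℝ) * S ^ 2) =
        ((N : ℝ) + (-1)) ^ 2 * S ^ 2 / N := by
      rw [div_pow]
      field_simp
    rw [hinner, ← sub_eq_add_neg, div_mul_eq_mul_div, div_div_div_cancel_right₀, mul_div_assoc',
      div_eq_div_iff (by positivity) (by
        exact mul_ne_zero (mul_ne_zero (mul_ne_zero hN0' (pow_ne_zero 2 hN1))
          (pow_ne_zero 2 hsin)) (pow_ne_zero 2 hAB))]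
    · ring
    · exact hN0'
  have hfinal := Filter.Tendsto.atTop_mul_pos (div_pos hPpos hDpos) tendsto_natCast_atTop_atTop hNE
  refine hfinal.congr fun N => ?_
  ring
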